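/- Halley's method applied to f(x) = x² + 1 gives the iteration x_{n+1} = (x_n³ - 3x_n)/(3x_n² - 1); consequently if x₀ = cot θ₀ and all iterates are defined, then x_n = cot(3ⁿ θ₀). -/

import Mathlib

open Real

/-- Halley's method applied to `f(x) = x² + 1` (so `f' = 2x`, `f'' = 2`) gives
the iteration `x_{n+1} = (x_n³ - 3 x_n)/(3 x_n² - 1)`; consequently, if
`x₀ = cot θ₀` and all iterates are defined, then `x_n = cot (3ⁿ θ₀)`. -/
theorem halley_orbit_cot (θ₀ : ℝ) (x : ℕ → ℝ)
    (h0 : x 0 = Real.cot θ₀)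
    (hne : ∀ n, x n ≠ 0)  -- f'(xₙ) = 2 xₙ ≠ 0
    (hden : ∀ n, 2 * x n - (x n ^ 2 + 1) * 2 / (2 * (2 * x n)) ≠ 0)
    (hden' : ∀ n, 3 * x n ^ 2 - 1 ≠ 0)
    (hrec : ∀ n, x (n + 1) =
      x n - (x n ^ 2 + 1) / (2 * x n - (x n ^ 2 + 1) * 2 / (2 * (2 * x n))))
    (hdef : ∀ n, Real.sin (3 ^ n * θ₀) ≠ 0) :
    (∀ n, x (n + 1) = (x n ^ 3 - 3 * x n) / (3 * x n ^ 2 - 1)) ∧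
      ∀ n, x n = Real.cot (3 ^ n * θ₀) := by
  have key : ∀ n, x (n + 1) = (x n ^ 3 - 3 * x n) / (3 * x n ^ 2 - 1) := by
    intro n
    have h1 := hne n
    have h2 := hden n
    have h3 := hden' n
    have hd6 : (-2 + x n ^ 2 * 6) ≠ 0 := by intro h; apply h3; linarith
    have ht : (-2 + x n ^ 2 * 6) * (-2 + x n ^ 2 * 6)⁻¹ = 1 := mul_inv_cancel₀ hd6
    rw [hrec n]
    field_simp [hd6] at h2 ⊢
    have h4 : (2 ^ 2 * x n ^ 2 - (x n ^ 2 + 1)) ≠ 0 := by intro h; apply hd6; linarith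
    have h5 : x n ^ 2 * 3 - 1 ≠ 0 := by intro h; apply h3; linarith
    field_simp
    ring
  refine ⟨key, ?_⟩
  intro n
  induction n with
  | zero => simpa using h0
  | succ n ih =>
    have hs : Real.sin (3 ^ n * θ₀) ≠ 0 := hdef n
    have hs3 : Real.sin (3 ^ (n + 1) * θ₀) ≠ 0 := hdef (n + 1)
    have h3t : (3 : ℝ) ^ (n + 1) * θ₀ = 3 * (3 ^ n * θ₀) := by ring
    rw [key n, ih, h3t]
    rw [h3t] at hs3
    have h3 := hden' n
    rw [ih] at h3
    simp only [Real.cot_eq_cos_div_sin] at h3 ⊢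
    rw [Real.sin_three_mul] at hs3
    rw [Real.sin_three_mul, Real.cos_three_mul]
    have hpy := Real.sin_sq_add_cos_sq (3 ^ n * θ₀)
    field_simp at h3
    have h3' : 3 * Real.cos (3 ^ n * θ₀) ^ 2 - Real.sin (3 ^ n * θ₀) ^ 2 ≠ 0 := (div_ne_zero_iff.mp h3).1
    field_simp [h3']
    have h4 : Real.cos (3 ^ n * θ₀) ^ 2 * 3 - Real.sin (3 ^ n * θ₀) ^ 2 ≠ 0 := by intro h; apply h3'; linarith
    have h5 : 3 - Real.sin (3 ^ n * θ₀) ^ 2 * 4 ≠ 0 := by intro h; apply hs3; linear_combination Real.sin (3 ^ n * θ₀) * h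
    rw [div_eq_div_iff h4 h5]
    linear_combination (-12 * Real.cos (3 ^ n * θ₀) * (Real.cos (3 ^ n * θ₀) ^ 2 - Real.sin (3 ^ n * θ₀) ^ 2)) * hpy
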